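/- Along the vertical geodesic γ_a(t) = (a₁,…,a_{n−1}, s + 3^{−ρ}t) with all aᵢ ∈ ℤ and ρ even entries among them, the Ricci curvature of g = h²δ in the direction of the unit tangent γ̇_a satisfies R̄ic(γ̇_a, γ̇_a) = π²(1 − n + (4/3)ρ). -/

import Mathlib

open Real Finset

/-- Partial derivative of `f` in the `i`-th coordinate direction. -/
noncomputable def pd {n : ℕ} (i : Fin n) (f : (Fin n → ℝ) → ℝ) (x : Fin n → ℝ) : ℝ :=
  fderiv ℝ f x (Pi.single i 1)

/-- The conformal factor `h(x) = ∏_{i=1}^{n-1} (2 + cos (π xᵢ))`. -/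
noncomputable def hC (n : ℕ) (x : Fin n → ℝ) : ℝ :=
  ∏ i : Fin (n - 1), (2 + Real.cos (Real.pi * x (Fin.castLE (Nat.sub_le n 1) i)))

/-- The conformally flat metric `g_{ij} = h² δ_{ij}`. -/
noncomputable def gM {n : ℕ} (h : (Fin n → ℝ) → ℝ) (x : Fin n → ℝ) (i j : Fin n) : ℝ :=
  if i = j then (h x) ^ 2 else 0

/-- Christoffel symbols `Γᵏ_{ij} = ½ Σₗ g^{kl} (∂ᵢ g_{jl} + ∂ⱼ g_{li} − ∂ₗ g_{ij})`,
with inverse metric `g^{kl} = h⁻² δ_{kl}`. -/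
noncomputable def Γconf {n : ℕ} (h : (Fin n → ℝ) → ℝ) (k i j : Fin n) (x : Fin n → ℝ) : ℝ :=
  (1 / 2) * ∑ l, (if k = l then ((h x) ^ 2)⁻¹ else 0) *
    (pd i (fun y => gM h y j l) x + pd j (fun y => gM h y l i) x - pd l (fun y => gM h y i j) x)

/-- Components of the curvature tensor: `R(∂ᵢ,∂ⱼ)∂ₖ = (Rcurv h l k i j) ∂ₗ`. -/
noncomputable def Rcurv {n : ℕ} (h : (Fin n → ℝ) → ℝ) (l k i j : Fin n) (x : Fin n → ℝ) : ℝ :=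
  pd i (fun y => Γconf h l j k y) x - pd j (fun y => Γconf h l i k y) x
    + ∑ m, Γconf h m j k x * Γconf h l i m x - ∑ m, Γconf h m i k x * Γconf h l j m x

/-- Jacobi operator components `(R̄_{∂_N})_{ij} = ⟨R̄(∂ᵢ,∂_N)∂_N, ∂ⱼ⟩`. -/
noncomputable def Jac {n : ℕ} (h : (Fin n → ℝ) → ℝ) (N i j : Fin n) (x : Fin n → ℝ) : ℝ :=
  ∑ l, gM h x l j * Rcurv h l N i N x

noncomputable def fc (n : ℕ) (i : Fin (n-1)) (x : Fin n → ℝ) : ℝ :=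
  2 + Real.cos (Real.pi * x (Fin.castLE (Nat.sub_le n 1) i))
lemma one_le_fc (n : ℕ) (i : Fin (n-1)) (x : Fin n → ℝ) : 1 ≤ fc n i x := by
  have := Real.neg_one_le_cos (Real.pi * x (Fin.castLE (Nat.sub_le n 1) i))
  unfold fc; linarith
lemma hC_eq (n : ℕ) (x : Fin n → ℝ) : hC n x = ∏ i, fc n i x := rfl
lemma one_le_hC (n : ℕ) (x : Fin n → ℝ) : 1 ≤ hC n x := by
  rw [hC_eq]
  have : ∀ i ∈ (Finset.univ : Finset (Fin (n-1))), (1:ℝ) ≤ fc n i x := fun i _ => one_le_fc n i x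
  calc (1:ℝ) = ∏ _i : Fin (n-1), 1 := by simp
  _ ≤ ∏ i, fc n i x := Finset.prod_le_prod (by intro i _; norm_num) this
lemma hC_ne (n : ℕ) (x : Fin n → ℝ) : hC n x ≠ 0 := by
  have := one_le_hC n x; linarith
lemma fc_ne (n : ℕ) (i : Fin (n-1)) (x : Fin n → ℝ) : fc n i x ≠ 0 := by
  have := one_le_fc n i x; linarith
lemma hasFDerivAt_coscomp (n : ℕ) (i : Fin (n-1)) (x : Fin n → ℝ) :
    HasFDerivAt (fun y : Fin n → ℝ => Real.cos (Real.pi * y (Fin.castLE (Nat.sub_le n 1) i)))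
      ((-Real.sin (Real.pi * x (Fin.castLE (Nat.sub_le n 1) i)) * Real.pi) •
        (ContinuousLinearMap.proj (R := ℝ) (φ := fun _ : Fin n => ℝ) (Fin.castLE (Nat.sub_le n 1) i))) x := by
  set c := Fin.castLE (Nat.sub_le n 1) i
  have hL : HasFDerivAt (fun y : Fin n → ℝ => y c)
      (ContinuousLinearMap.proj (R := ℝ) (φ := fun _ : Fin n => ℝ) c) x :=
    (ContinuousLinearMap.proj (R := ℝ) (φ := fun _ : Fin n => ℝ) c).hasFDerivAt
  have h1 : HasDerivAt (fun u : ℝ => Real.pi * u) Real.pi (x c) := by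
    simpa using (hasDerivAt_id (x c)).const_mul Real.pi
  have h2 : HasDerivAt (fun u : ℝ => Real.cos (Real.pi * u))
      (-Real.sin (Real.pi * x c) * Real.pi) (x c) :=
    (Real.hasDerivAt_cos (Real.pi * x c)).comp _ h1
  exact h2.comp_hasFDerivAt x hL
lemma hasFDerivAt_fc (n : ℕ) (i : Fin (n-1)) (x : Fin n → ℝ) :
    HasFDerivAt (fc n i)
      ((-Real.sin (Real.pi * x (Fin.castLE (Nat.sub_le n 1) i)) * Real.pi) •
        (ContinuousLinearMap.proj (R := ℝ) (φ := fun _ : Fin n => ℝ) (Fin.castLE (Nat.sub_le n 1) i))) x :=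
  (hasFDerivAt_coscomp n i x).const_add 2
lemma hasFDerivAt_sincomp (n : ℕ) (i : Fin (n-1)) (x : Fin n → ℝ) :
    HasFDerivAt (fun y : Fin n → ℝ => Real.sin (Real.pi * y (Fin.castLE (Nat.sub_le n 1) i)))
      ((Real.cos (Real.pi * x (Fin.castLE (Nat.sub_le n 1) i)) * Real.pi) •
        (ContinuousLinearMap.proj (R := ℝ) (φ := fun _ : Fin n => ℝ) (Fin.castLE (Nat.sub_le n 1) i))) x := by
  set c := Fin.castLE (Nat.sub_le n 1) i
  have hL : HasFDerivAt (fun y : Fin n → ℝ => y c)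
      (ContinuousLinearMap.proj (R := ℝ) (φ := fun _ : Fin n => ℝ) c) x :=
    (ContinuousLinearMap.proj (R := ℝ) (φ := fun _ : Fin n => ℝ) c).hasFDerivAt
  have h1 : HasDerivAt (fun u : ℝ => Real.pi * u) Real.pi (x c) := by
    simpa using (hasDerivAt_id (x c)).const_mul Real.pi
  have h2 : HasDerivAt (fun u : ℝ => Real.sin (Real.pi * u))
      (Real.cos (Real.pi * x c) * Real.pi) (x c) :=
    (Real.hasDerivAt_sin (Real.pi * x c)).comp _ h1
  exact h2.comp_hasFDerivAt x hL
noncomputable def hC' (n : ℕ) (x : Fin n → ℝ) : (Fin n → ℝ) →L[ℝ] ℝ :=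
  ∑ i : Fin (n-1), (∏ j ∈ Finset.univ.erase i, fc n j x) •
    ((-Real.sin (Real.pi * x (Fin.castLE (Nat.sub_le n 1) i)) * Real.pi) •
      (ContinuousLinearMap.proj (R := ℝ) (φ := fun _ : Fin n => ℝ) (Fin.castLE (Nat.sub_le n 1) i)))
lemma hasFDerivAt_hC (n : ℕ) (x : Fin n → ℝ) :
    HasFDerivAt (hC n) (hC' n x) x := by
  have := HasFDerivAt.finset_prod (u := Finset.univ)
    (fun i _ => hasFDerivAt_fc n i x)
  exact this
lemma pd_hC (n : ℕ) (m : Fin n) (x : Fin n → ℝ) :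
    pd m (hC n) x = ∑ i : Fin (n-1),
      (if Fin.castLE (Nat.sub_le n 1) i = m then
        (-Real.sin (Real.pi * x (Fin.castLE (Nat.sub_le n 1) i)) * Real.pi) *
          ∏ j ∈ Finset.univ.erase i, fc n j x
       else 0) := by
  unfold pd
  rw [(hasFDerivAt_hC n x).fderiv]
  unfold hC'
  rw [ContinuousLinearMap.sum_apply]
  refine Finset.sum_congr rfl fun i _ => ?_
  simp only [ContinuousLinearMap.smul_apply, ContinuousLinearMap.proj_apply,
    Pi.single_apply, smul_eq_mul]
  split_ifs with h
  · ring
  · ring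
lemma pd_hC_c (n : ℕ) (i : Fin (n-1)) (x : Fin n → ℝ) :
    pd (Fin.castLE (Nat.sub_le n 1) i) (hC n) x =
      (-Real.sin (Real.pi * x (Fin.castLE (Nat.sub_le n 1) i)) * Real.pi) *
        ∏ j ∈ Finset.univ.erase i, fc n j x := by
  rw [pd_hC]
  rw [Finset.sum_eq_single i]
  · simp
  · intro b _ hb
    rw [if_neg]
    intro h
    exact hb (Fin.castLE_injective _ h)
  · simp
lemma pd_hC_N (n : ℕ) (m : Fin n) (hm : (m : ℕ) = n - 1) (x : Fin n → ℝ) :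
    pd m (hC n) x = 0 := by
  rw [pd_hC]
  refine Finset.sum_eq_zero fun i _ => ?_
  rw [if_neg]
  intro h
  have : ((Fin.castLE (Nat.sub_le n 1) i : Fin n) : ℕ) = (m : ℕ) := by rw [h]
  simp [hm] at this
  omega
lemma pd_const {n : ℕ} (m : Fin n) (c : ℝ) (x : Fin n → ℝ) :
    pd m (fun _ => c) x = 0 := by
  unfold pd; rw [fderiv_fun_const]; simp
lemma pd_sq (n : ℕ) (m : Fin n) (x : Fin n → ℝ) :
    pd m (fun y => hC n y ^ 2) x = 2 * hC n x * pd m (hC n) x := by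
  unfold pd
  have heq : (fun y => hC n y ^ 2) = fun y => hC n y * hC n y := by
    funext y; ring
  rw [heq]
  have h2 := (hasFDerivAt_hC n x).mul (hasFDerivAt_hC n x)
  rw [HasFDerivAt.fderiv (f := fun y => hC n y * hC n y) h2, (hasFDerivAt_hC n x).fderiv]
  simp [smul_eq_mul]
  ring
lemma pd_gM (n : ℕ) (m i j : Fin n) (x : Fin n → ℝ) :
    pd m (fun y => gM (hC n) y i j) x =
      if i = j then 2 * hC n x * pd m (hC n) x else 0 := by
  by_cases hij : i = j
  · rw [if_pos hij]
    have : (fun y => gM (hC n) y i j) = fun y => hC n y ^ 2 := by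
      funext y; simp [gM, hij]
    rw [this, pd_sq]
  · rw [if_neg hij]
    have : (fun y => gM (hC n) y i j) = fun _ => (0:ℝ) := by
      funext y; simp [gM, hij]
    rw [this, pd_const]
lemma Γconf_eq (n : ℕ) (k i j : Fin n) (x : Fin n → ℝ) :
    Γconf (hC n) k i j x =
      ((if j = k then pd i (hC n) x else 0) + (if k = i then pd j (hC n) x else 0)
        - (if i = j then pd k (hC n) x else 0)) / hC n x := by
  unfold Γconf
  simp only [ite_mul, zero_mul]
  rw [Finset.sum_ite_eq]
  simp only [Finset.mem_univ, if_pos]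
  rw [pd_gM, pd_gM, pd_gM]
  have hne := hC_ne n x
  have h1 : (if j = k then 2 * hC n x * pd i (hC n) x else 0)
      = 2 * hC n x * (if j = k then pd i (hC n) x else 0) := by split_ifs <;> ring
  have h2 : (if k = i then 2 * hC n x * pd j (hC n) x else 0)
      = 2 * hC n x * (if k = i then pd j (hC n) x else 0) := by split_ifs <;> ring
  have h3 : (if i = j then 2 * hC n x * pd k (hC n) x else 0)
      = 2 * hC n x * (if i = j then pd k (hC n) x else 0) := by split_ifs <;> ring
  rw [h1, h2, h3]
  set A := (if j = k then pd i (hC n) x else 0) with hA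
  set B := (if k = i then pd j (hC n) x else 0) with hB
  set C := (if i = j then pd k (hC n) x else 0) with hC2
  field_simp
lemma Γ_iNN (n : ℕ) (i N : Fin n) (hiN : i ≠ N) (x : Fin n → ℝ) :
    Γconf (hC n) i N N x = -(pd i (hC n) x) / hC n x := by
  rw [Γconf_eq]
  rw [if_neg (fun h => hiN h.symm), if_neg (fun h => hiN h), if_pos rfl]
  ring

-- Γ^i_{iN} = ∂_N h / h
lemma Γ_iiN (n : ℕ) (i N : Fin n) (hiN : i ≠ N) (x : Fin n → ℝ) :
    Γconf (hC n) i i N x = pd N (hC n) x / hC n x := by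
  rw [Γconf_eq]
  rw [if_neg (fun h => hiN h.symm), if_pos rfl, if_neg hiN]
  ring

-- all first derivatives of hC vanish at points with integer "horizontal" coordinates
lemma pd_hC_zero (n : ℕ) (m : Fin n) (x : Fin n → ℝ)
    (hx : ∀ i : Fin (n-1), ∃ z : ℤ, x (Fin.castLE (Nat.sub_le n 1) i) = (z : ℝ)) :
    pd m (hC n) x = 0 := by
  rw [pd_hC]
  refine Finset.sum_eq_zero fun i _ => ?_
  obtain ⟨z, hz⟩ := hx i
  have : Real.sin (Real.pi * x (Fin.castLE (Nat.sub_le n 1) i)) = 0 := by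
    rw [hz, mul_comm]
    exact Real.sin_int_mul_pi z
  split_ifs <;> simp [this]
lemma Γ_zero (n : ℕ) (k i j : Fin n) (x : Fin n → ℝ)
    (hx : ∀ i : Fin (n-1), ∃ z : ℤ, x (Fin.castLE (Nat.sub_le n 1) i) = (z : ℝ)) :
    Γconf (hC n) k i j x = 0 := by
  rw [Γconf_eq]
  rw [pd_hC_zero n i x hx, pd_hC_zero n j x hx, pd_hC_zero n k x hx]
  simp
lemma pd_Γ_key (n : ℕ) (N : Fin n) (hN : (N:ℕ) = n-1) (i0 : Fin (n-1)) (x : Fin n → ℝ)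
    (hsin : Real.sin (Real.pi * x (Fin.castLE (Nat.sub_le n 1) i0)) = 0) :
    pd (Fin.castLE (Nat.sub_le n 1) i0)
        (fun y => Γconf (hC n) (Fin.castLE (Nat.sub_le n 1) i0) N N y) x
      = Real.pi^2 * Real.cos (Real.pi * x (Fin.castLE (Nat.sub_le n 1) i0)) *
        (∏ j ∈ Finset.univ.erase i0, fc n j x) / hC n x := by
  set ci := Fin.castLE (Nat.sub_le n 1) i0 with hci
  have hiN : ci ≠ N := by
    intro h
    have h1 : (ci : ℕ) = (N : ℕ) := by rw [h]
    have h2 : (ci : ℕ) = (i0 : ℕ) := rfl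
    have := i0.isLt
    omega
  have hpd : ∀ y, pd ci (hC n) y = (-Real.sin (Real.pi * y ci) * Real.pi) *
      ∏ j ∈ Finset.univ.erase i0, fc n j y := fun y => pd_hC_c n i0 y
  have hfun : (fun y => Γconf (hC n) ci N N y)
      = fun y => -((-Real.sin (Real.pi * y ci) * Real.pi) *
          ∏ j ∈ Finset.univ.erase i0, fc n j y) * (hC n y)⁻¹ := by
    funext y
    rw [Γ_iNN n ci N hiN y, hpd y, div_eq_mul_inv]
  have hf : HasFDerivAt (fun y : Fin n → ℝ => -Real.sin (Real.pi * y ci) * Real.pi)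
      (Real.pi • (-((Real.cos (Real.pi * x ci) * Real.pi) •
        (ContinuousLinearMap.proj (R := ℝ) (φ := fun _ : Fin n => ℝ) ci)))) x :=
    ((hasFDerivAt_sincomp n i0 x).neg).mul_const Real.pi
  have hP : HasFDerivAt (fun y => ∏ j ∈ Finset.univ.erase i0, fc n j y)
      (∑ j ∈ Finset.univ.erase i0, (∏ k ∈ (Finset.univ.erase i0).erase j, fc n k x) •
        ((-Real.sin (Real.pi * x (Fin.castLE (Nat.sub_le n 1) j)) * Real.pi) •
          (ContinuousLinearMap.proj (R := ℝ) (φ := fun _ : Fin n => ℝ)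
            (Fin.castLE (Nat.sub_le n 1) j)))) x :=
    HasFDerivAt.finset_prod (fun j _ => hasFDerivAt_fc n j x)
  have hu := (hf.mul hP).neg
  have hinv : HasFDerivAt (fun y => (hC n y)⁻¹) ((-((hC n x) ^ 2)⁻¹) • hC' n x) x :=
    (hasDerivAt_inv (hC_ne n x)).comp_hasFDerivAt x (hasFDerivAt_hC n x)
  have hq := hu.mul hinv
  rw [hfun]
  unfold pd
  rw [HasFDerivAt.fderiv (f := fun y => -(-Real.sin (Real.pi * y ci) * Real.pi *
    ∏ j ∈ Finset.univ.erase i0, fc n j y) * (hC n y)⁻¹) hq]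
  simp only [ContinuousLinearMap.coe_smul', Pi.smul_apply, ContinuousLinearMap.add_apply,
    ContinuousLinearMap.smul_apply, ContinuousLinearMap.neg_apply, ContinuousLinearMap.sub_apply,
    ContinuousLinearMap.sum_apply, ContinuousLinearMap.proj_apply, smul_eq_mul, hsin,
    Pi.neg_apply, Pi.mul_apply]
  rw [Pi.single_eq_same]
  have hne := hC_ne n x
  field_simp
  ring
lemma cos_pi_int (z : ℤ) : Real.cos (Real.pi * z) = if Even z then 1 else -1 := by
  by_cases h : Even z
  · rw [if_pos h]
    obtain ⟨k, hk⟩ := h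
    have : (Real.pi * z) = (k : ℝ) * (2 * Real.pi) := by
      rw [hk]; push_cast; ring
    rw [this, Real.cos_int_mul_two_pi]
  · rw [if_neg h]
    obtain ⟨k, hk⟩ := Int.not_even_iff_odd.mp h
    have : (Real.pi * z) = (k : ℝ) * (2 * Real.pi) + Real.pi := by
      rw [hk]; push_cast; ring
    rw [this]
    rw [Real.cos_add, Real.cos_int_mul_two_pi, Real.cos_pi, Real.sin_pi]
    ring

theorem stmt_9 (n : ℕ) (hn : 2 ≤ n) (a : Fin (n - 1) → ℤ) (s t : ℝ) :
    let N : Fin n := ⟨n - 1, by omega⟩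
    let ρ : ℕ := (Finset.univ.filter fun i => Even (a i)).card
    let γt : Fin n → ℝ := fun j =>
      if hj : (j : ℕ) < n - 1 then (a ⟨j, hj⟩ : ℝ) else s + ((3 : ℝ) ^ ρ)⁻¹ * t
    ∑ i ∈ Finset.univ.erase N, ((hC n γt) ^ 2)⁻¹ * Jac (hC n) N i i γt
      = π ^ 2 * (1 - (n : ℝ) + (4 / 3) * (ρ : ℝ)) := by
  intro N ρ γt
  have hγc : ∀ i : Fin (n-1), γt (Fin.castLE (Nat.sub_le n 1) i) = (a i : ℝ) := by
    intro i
    have hi : ((Fin.castLE (Nat.sub_le n 1) i : Fin n) : ℕ) < n - 1 := i.isLt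
    simp only [γt, dif_pos hi]
    rfl
  have hint : ∀ i : Fin (n-1), ∃ z : ℤ, γt (Fin.castLE (Nat.sub_le n 1) i) = (z : ℝ) :=
    fun i => ⟨a i, hγc i⟩
  have hNval : (N : ℕ) = n - 1 := rfl
  have hne := hC_ne n γt
  -- reduce summand to Rcurv
  have hsummand : ∀ i ∈ Finset.univ.erase N,
      ((hC n γt) ^ 2)⁻¹ * Jac (hC n) N i i γt = Rcurv (hC n) i N i N γt := by
    intro i _
    have hJ : Jac (hC n) N i i γt = hC n γt ^ 2 * Rcurv (hC n) i N i N γt := by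
      unfold Jac
      rw [Finset.sum_eq_single i]
      · simp [gM]
      · intro b _ hb; simp [gM, hb]
      · simp
    rw [hJ]
    field_simp
  rw [Finset.sum_congr rfl hsummand]
  -- compute Rcurv at the point for i = castLE i0
  have hRc : ∀ i0 : Fin (n-1),
      Rcurv (hC n) (Fin.castLE (Nat.sub_le n 1) i0) N (Fin.castLE (Nat.sub_le n 1) i0) N γt
        = if Even (a i0) then π ^ 2 / 3 else -(π ^ 2) := by
    intro i0
    set ci := Fin.castLE (Nat.sub_le n 1) i0 with hci
    have hiN : ci ≠ N := by
      intro h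
      have h1 : (ci : ℕ) = (N : ℕ) := by rw [h]
      have h2 : (ci : ℕ) = (i0 : ℕ) := rfl
      have := i0.isLt
      omega
    have hsin : Real.sin (Real.pi * γt ci) = 0 := by
      rw [hγc i0, mul_comm]
      exact Real.sin_int_mul_pi (a i0)
    unfold Rcurv
    have h1 := pd_Γ_key n N hNval i0 γt hsin
    have h2 : (fun y => Γconf (hC n) ci ci N y) = fun _ => (0:ℝ) := by
      funext y
      rw [Γ_iiN n ci N hiN y, pd_hC_N n N hNval y]
      simp
    rw [h2, pd_const]
    have hz : ∀ k i j : Fin n, Γconf (hC n) k i j γt = 0 := fun k i j => Γ_zero n k i j γt hint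
    simp only [hz, mul_zero, zero_mul, Finset.sum_const_zero]
    rw [h1]
    -- now evaluate
    have hprod : hC n γt = fc n i0 γt * ∏ j ∈ Finset.univ.erase i0, fc n j γt := by
      rw [hC_eq]
      exact (Finset.mul_prod_erase Finset.univ _ (Finset.mem_univ i0)).symm
    have hPne : (∏ j ∈ Finset.univ.erase i0, fc n j γt) ≠ 0 :=
      Finset.prod_ne_zero_iff.mpr fun j _ => fc_ne n j γt
    have hfc : fc n i0 γt = 2 + Real.cos (Real.pi * γt ci) := rfl
    have hcos : Real.cos (Real.pi * γt ci) = if Even (a i0) then 1 else -1 := by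
      rw [hγc i0]; exact cos_pi_int (a i0)
    rw [hprod, hfc, hcos]
    by_cases hev : Even (a i0)
    · rw [if_pos hev, if_pos hev]
      field_simp
      ring
    · rw [if_neg hev, if_neg hev]
      norm_num
      field_simp
  -- reindex the sum
  have himg : Finset.univ.erase N =
      Finset.image (Fin.castLE (Nat.sub_le n 1)) Finset.univ := by
    ext i
    simp only [Finset.mem_erase, Finset.mem_univ, and_true, Finset.mem_image, true_and]
    constructor
    · intro hiN
      have hlt : (i : ℕ) < n - 1 := by
        have := i.isLt
        have : (i : ℕ) ≠ n - 1 := fun h => hiN (Fin.ext (h.trans hNval.symm))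
        omega
      exact ⟨⟨(i : ℕ), hlt⟩, rfl⟩
    · rintro ⟨i0, rfl⟩
      intro h
      have h1 : ((Fin.castLE (Nat.sub_le n 1) i0 : Fin n) : ℕ) = (N : ℕ) := by rw [h]
      have h2 : ((Fin.castLE (Nat.sub_le n 1) i0 : Fin n) : ℕ) = (i0 : ℕ) := rfl
      have := i0.isLt
      omega
  rw [himg, Finset.sum_image (fun i _ j _ h => Fin.castLE_injective _ h)]
  rw [Finset.sum_congr rfl fun i0 _ => hRc i0]
  -- final arithmetic
  rw [Finset.sum_ite, Finset.sum_const, Finset.sum_const]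
  have hcard : (Finset.univ.filter fun i : Fin (n-1) => ¬ Even (a i)).card = (n - 1) - ρ := by
    have h := Finset.card_filter_add_card_filter_not
      (s := (Finset.univ : Finset (Fin (n-1)))) (p := fun i => Even (a i))
    simp only [Finset.card_univ, Fintype.card_fin] at h
    omega
  rw [hcard]
  have hρle : ρ ≤ n - 1 := by
    have := Finset.card_filter_le (Finset.univ : Finset (Fin (n-1))) (fun i => Even (a i))
    simpa using this
  have hcast : ((n - 1 - ρ : ℕ) : ℝ) = (n : ℝ) - 1 - (ρ : ℝ) := by
    have h1 : ((n - 1 : ℕ) : ℝ) = (n : ℝ) - 1 := by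
      push_cast [Nat.cast_sub (by omega : 1 ≤ n)]; ring
    rw [Nat.cast_sub hρle, h1]
  rw [nsmul_eq_mul, nsmul_eq_mul, hcast]
  ring
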